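/- arXiv:2605.05777 — 2 statements merged into one kernel-verified Lean document; each statement's English description precedes it below -/
import Mathlib

section
/- Consider a Zipf distribution on ℕ₊ with parameter α > 1, i.e., P(i) = i^{−α}/ζ(α) where ζ(α) = Σ_{j=1}^∞ j^{−α}. Then the expected missing mass after k i.i.d. samples satisfies 𝔼[U_k] = Σ_{i=1}^∞ P(i)·(1 − P(i))^k, and there exist constants C > 0 and k₀ such that for all k > k₀, 𝔼[U_k] ≤ C·k^{−(α−1)/α}. -/
open Real Finset

/-- `(1 + p s)(1-s)^p ≤ 1` for `0 ≤ p`, `0 ≤ s ≤ 1`. -/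
lemma aux_exp {p s : ℝ} (hp : 0 ≤ p) (hs0 : 0 ≤ s) (hs1 : s ≤ 1) :
    (1 + p * s) * (1 - s) ^ p ≤ 1 := by
  have h1 : (1 - s : ℝ) ≤ Real.exp (-s) := by
    have := Real.add_one_le_exp (-s); linarith
  have h2 : (1 - s : ℝ) ^ p ≤ Real.exp (-s) ^ p :=
    Real.rpow_le_rpow (by linarith) h1 hp
  have h3 : Real.exp (-s) ^ p = Real.exp (-(p * s)) := by
    rw [← Real.exp_mul]; ring_nf
  have h4 : (1 + p * s) ≤ Real.exp (p * s) := by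
    have := Real.add_one_le_exp (p * s); linarith
  have hps : 0 ≤ p * s := mul_nonneg hp hs0
  have h5 : (1 + p * s) * Real.exp (-(p * s)) ≤ 1 := by
    rw [Real.exp_neg]
    rw [mul_inv_le_iff₀ (Real.exp_pos _), one_mul]
    exact h4
  calc (1 + p * s) * (1 - s) ^ p ≤ (1 + p * s) * Real.exp (-(p*s)) := by
        apply mul_le_mul_of_nonneg_left (h3 ▸ h2) (by positivity)
    _ ≤ 1 := h5

/-- Key pointwise inequality : `p (x+1)^{-(p+1)} ≤ x^{-p} - (x+1)^{-p}`. -/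
lemma key_ineq {p : ℝ} (hp : 0 < p) {x : ℝ} (hx : 1 ≤ x) :
    p * (x + 1) ^ (-(p + 1)) ≤ x ^ (-p) - (x + 1) ^ (-p) := by
  have hx0 : 0 < x := by linarith
  have hy0 : (0:ℝ) < x + 1 := by linarith
  set s : ℝ := 1 / (x + 1) with hs
  have hs0 : 0 ≤ s := by positivity
  have hs1 : s ≤ 1 := by rw [hs, div_le_one hy0]; linarith
  have h1 : (1 + p * s) * (1 - s) ^ p ≤ 1 := aux_exp hp.le hs0 hs1
  have h1s : 1 - s = x / (x + 1) := by rw [hs]; field_simp; ring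
  have hA : (0:ℝ) < x ^ p := Real.rpow_pos_of_pos hx0 _
  have hB : (0:ℝ) < (x + 1) ^ p := Real.rpow_pos_of_pos hy0 _
  have h2 : (1 + p * s) * (x ^ p / (x + 1) ^ p) ≤ 1 := by
    rwa [h1s, Real.div_rpow hx0.le hy0.le] at h1
  -- multiply out : (1 + p/(x+1)) * x^p ≤ (x+1)^p
  have h3 : (1 + p * s) * x ^ p ≤ (x + 1) ^ p := by
    calc (1 + p * s) * x ^ p = ((1 + p * s) * (x ^ p / (x + 1) ^ p)) * (x+1)^p := by
          field_simp
      _ ≤ 1 * (x+1)^p := mul_le_mul_of_nonneg_right h2 hB.le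
      _ = (x+1)^p := one_mul _
  have e1 : x ^ (-p) = (x ^ p)⁻¹ := by rw [Real.rpow_neg hx0.le]
  have e2 : (x+1) ^ (-p) = ((x+1) ^ p)⁻¹ := by rw [Real.rpow_neg hy0.le]
  have e3 : (x+1) ^ (-(p+1)) = ((x+1) ^ p * (x+1))⁻¹ := by
    rw [Real.rpow_neg hy0.le, Real.rpow_add hy0, Real.rpow_one]
  rw [e1, e2, e3]
  rw [le_sub_iff_add_le]
  have h4 : p * x ^ p ≤ (x + 1) * ((x+1)^p - x ^ p) := by
    have : p * s * x ^ p ≤ (x+1)^p - x ^ p := by nlinarith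
    rw [hs] at this
    calc p * x ^ p = (x+1) * (p * (1/(x+1)) * x ^ p) := by field_simp
      _ ≤ (x+1) * ((x+1)^p - x ^ p) := by
          apply mul_le_mul_of_nonneg_left this hy0.le
  have e4 : p * ((x+1)^p*(x+1))⁻¹ + ((x+1) ^ p)⁻¹ = (p + (x+1)) / ((x+1)^p*(x+1)) := by
    field_simp
  rw [e4, inv_eq_one_div, div_le_div_iff₀ (by positivity) hA]
  nlinarith [h4]

lemma tail_partial {p : ℝ} (hp : 0 < p) {N : ℕ} (hN : 1 ≤ N) (m : ℕ) :
    p * ∑ n ∈ Finset.range m, ((n:ℝ) + N + 1) ^ (-(p+1))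
      ≤ (N:ℝ) ^ (-p) - ((N:ℝ) + m) ^ (-p) := by
  induction m with
  | zero => simp
  | succ m ih =>
    rw [Finset.sum_range_succ, mul_add]
    have hx : (1:ℝ) ≤ (N:ℝ) + m := by
      have h1 : (1:ℝ) ≤ (N:ℝ) := by exact_mod_cast hN
      have h2 : (0:ℝ) ≤ (m:ℝ) := Nat.cast_nonneg m
      linarith
    have hk := key_ineq hp hx
    have e : ((m:ℝ) + N + 1) = ((N:ℝ) + m) + 1 := by ring
    rw [e]
    push_cast
    have e2 : ((N:ℝ) + (m + 1)) = ((N:ℝ) + m) + 1 := by ring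
    rw [e2]
    linarith

lemma term_bound {q : ℝ} (hq0 : 0 ≤ q) (hq1 : q ≤ 1) {k : ℕ} (hk : 0 < k) :
    q * (1 - q) ^ k ≤ 1 / k := by
  have h1 : (1 - q : ℝ) ≤ Real.exp (-q) := by
    have := Real.add_one_le_exp (-q); linarith
  have h2 : (1 - q) ^ k ≤ Real.exp (-q) ^ k := pow_le_pow_left₀ (by linarith) h1 k
  have h3 : Real.exp (-q) ^ k = Real.exp (-(q * k)) := by
    rw [← Real.exp_nat_mul]; ring_nf
  have hk0 : (0:ℝ) < k := by exact_mod_cast hk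
  have h4 : q * k * Real.exp (-(q * k)) ≤ 1 := by
    rw [Real.exp_neg, mul_inv_le_iff₀ (Real.exp_pos _), one_mul]
    have := Real.add_one_le_exp (q * k)
    linarith
  have h5 : q * (1 - q) ^ k ≤ q * Real.exp (-(q * k)) :=
    mul_le_mul_of_nonneg_left (h3 ▸ h2) hq0
  have h6 : q * Real.exp (-(q * k)) ≤ 1 / k := by
    rw [le_div_iff₀ hk0]
    calc q * Real.exp (-(q * k)) * k = q * k * Real.exp (-(q * k)) := by ring
      _ ≤ 1 := h4
  linarith


/-- Zipf probability `P(i) = i^{−α}/ζ(α)` on the positive integers. -/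
noncomputable def zipf (α : ℝ) (i : ℕ+) : ℝ :=
  ((i : ℕ) : ℝ) ^ (-α) / ∑' j : ℕ+, ((j : ℕ) : ℝ) ^ (-α)

/-- For a Zipf distribution with parameter `α > 1`, the expected missing mass
`𝔼[U_k] = Σ_i P(i)(1 − P(i))^k` satisfies `𝔼[U_k] ≤ C·k^{−(α−1)/α}` for all
large `k`, for some constant `C > 0`. -/
theorem stmt_7 (α : ℝ) (hα : 1 < α) :
    ∃ C > (0 : ℝ), ∃ k₀ : ℕ, ∀ k : ℕ, k₀ < k →
      ∑' i : ℕ+, zipf α i * (1 - zipf α i) ^ k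
        ≤ C * (k : ℝ) ^ (-(α - 1) / α) := by
  have hp : (0:ℝ) < α - 1 := by linarith
  have hsum0 : Summable (fun n : ℕ => ((n:ℝ)) ^ (-α)) :=
    Real.summable_nat_rpow.mpr (by linarith)
  have hsumP : Summable (fun i : ℕ+ => ((i:ℕ):ℝ) ^ (-α)) :=
    hsum0.comp_injective (fun a b h => PNat.coe_injective h)
  set Z := ∑' j : ℕ+, ((j:ℕ):ℝ) ^ (-α) with hZdef
  have hterm0 : ∀ j : ℕ+, 0 ≤ ((j:ℕ):ℝ) ^ (-α) :=
    fun j => Real.rpow_nonneg (Nat.cast_nonneg _) _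
  have hZ1 : (1:ℝ) ≤ Z := by
    have h := Summable.le_tsum hsumP 1 (fun j _ => hterm0 j)
    simpa using h
  have hZ0 : (0:ℝ) < Z := lt_of_lt_of_le one_pos hZ1
  have hq0 : ∀ i : ℕ+, 0 ≤ zipf α i := fun i => div_nonneg (hterm0 i) hZ0.le
  have hq1 : ∀ i : ℕ+, zipf α i ≤ 1 := by
    intro i
    rw [zipf, div_le_one hZ0]
    exact Summable.le_tsum hsumP i (fun j _ => hterm0 j)
  have hqle : ∀ i : ℕ+, zipf α i ≤ ((i:ℕ):ℝ) ^ (-α) := fun i =>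
    div_le_self (hterm0 i) hZ1
  refine ⟨2 + 1/(α-1), by positivity, 0, fun k hk => ?_⟩
  have hk0 : (0:ℝ) < k := by exact_mod_cast hk
  have hk1 : (1:ℝ) ≤ k := by exact_mod_cast hk
  set F : ℕ+ → ℝ := fun i => zipf α i * (1 - zipf α i) ^ k with hFdef
  have hF0 : ∀ i, 0 ≤ F i := fun i =>
    mul_nonneg (hq0 i) (pow_nonneg (by linarith [hq1 i]) k)
  have hFle : ∀ i, F i ≤ ((i:ℕ):ℝ)^(-α) := by
    intro i
    calc F i ≤ zipf α i * 1 := by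
          apply mul_le_mul_of_nonneg_left
            (pow_le_one₀ (by linarith [hq1 i]) (by linarith [hq0 i])) (hq0 i)
      _ = zipf α i := mul_one _
      _ ≤ _ := hqle i
  have hFsum : Summable F := Summable.of_nonneg_of_le hF0 hFle hsumP
  set G : ℕ → ℝ := fun n => F n.succPNat with hGdef
  have hGF : ∑' i : ℕ+, F i = ∑' n : ℕ, G n :=
    (Equiv.pnatEquivNat.symm.tsum_eq F).symm
  have hGsum : Summable G := hFsum.comp_injective Equiv.pnatEquivNat.symm.injective
  set N := ⌈(k:ℝ) ^ (α⁻¹)⌉₊ with hNdef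
  have hr0 : (0:ℝ) < (k:ℝ) ^ (α⁻¹) := Real.rpow_pos_of_pos hk0 _
  have hr1 : (1:ℝ) ≤ (k:ℝ) ^ (α⁻¹) := by
    calc (1:ℝ) = (1:ℝ) ^ (α⁻¹) := (Real.one_rpow _).symm
      _ ≤ (k:ℝ) ^ (α⁻¹) := Real.rpow_le_rpow zero_le_one hk1 (by positivity)
  have hN1 : 1 ≤ N := Nat.ceil_pos.mpr hr0
  have hNr : (k:ℝ) ^ (α⁻¹) ≤ (N:ℝ) := Nat.le_ceil _
  have hN0 : (0:ℝ) < (N:ℝ) := lt_of_lt_of_le hr0 hNr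
  have hNle : (N:ℝ) ≤ 2 * (k:ℝ) ^ (α⁻¹) := by
    have h := Nat.ceil_lt_add_one (le_of_lt hr0)
    rw [← hNdef] at h
    linarith
  have hsplit := Summable.sum_add_tsum_nat_add (f := G) N hGsum
  have hhead : ∑ n ∈ Finset.range N, G n ≤ (N:ℝ) * (1/k) := by
    calc ∑ n ∈ Finset.range N, G n ≤ ∑ _n ∈ Finset.range N, (1/k : ℝ) :=
          Finset.sum_le_sum (fun n _ => term_bound (hq0 _) (hq1 _) hk)
      _ = (N:ℝ) * (1/k) := by simp
  have htail : ∑' n : ℕ, G (n + N) ≤ (N:ℝ)^(-(α-1)) / (α-1) := by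
    apply Real.tsum_le_of_sum_range_le (fun n => hF0 _)
    intro m
    have h1 : ∀ n ∈ Finset.range m, G (n+N) ≤ ((n:ℝ) + (N:ℝ) + 1) ^ (-((α-1)+1)) := by
      intro n _
      have h2 : G (n+N) ≤ (((n+N).succPNat : ℕ) : ℝ) ^ (-α) := hFle _
      have e1 : (((n+N).succPNat : ℕ) : ℝ) = (n:ℝ) + (N:ℝ) + 1 := by
        have e0 : ((n+N).succPNat : ℕ) = n+N+1 := rfl
        rw [e0]; push_cast; ring
      have e2 : -((α-1)+1) = -α := by ring
      rw [e1] at h2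
      rw [e2]
      exact h2
    have h2 := tail_partial hp hN1 m
    have hB : (0:ℝ) ≤ ((N:ℝ)+(m:ℝ))^(-(α-1)) := Real.rpow_nonneg (by positivity) _
    have h3 : ∑ n ∈ Finset.range m, G (n+N)
        ≤ ∑ n ∈ Finset.range m, ((n:ℝ) + (N:ℝ) + 1) ^ (-((α-1)+1)) :=
      Finset.sum_le_sum h1
    rw [le_div_iff₀ hp]
    have h4 : (∑ n ∈ Finset.range m, ((n:ℝ) + (N:ℝ) + 1) ^ (-((α-1)+1))) * (α-1)
        = (α-1) * ∑ n ∈ Finset.range m, ((n:ℝ) + (N:ℝ) + 1) ^ (-((α-1)+1)) := by ring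
    nlinarith [h3, h2, hB]
  have hE : ∑' i : ℕ+, F i ≤ (N:ℝ)*(1/k) + (N:ℝ)^(-(α-1))/(α-1) := by
    rw [hGF, ← hsplit]
    exact add_le_add hhead htail
  set X := (k:ℝ) ^ (-(α - 1) / α) with hXdef
  have hX0 : (0:ℝ) < X := Real.rpow_pos_of_pos hk0 _
  have h7 : (N:ℝ)*(1/k) ≤ 2 * X := by
    have e : (k:ℝ)^(α⁻¹) / k = X := by
      rw [hXdef]
      rw [show -(α-1)/α = α⁻¹ - 1 by field_simp; ring]
      rw [Real.rpow_sub hk0, Real.rpow_one]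
    calc (N:ℝ)*(1/k) ≤ (2*(k:ℝ)^(α⁻¹))*(1/k) :=
          mul_le_mul_of_nonneg_right hNle (by positivity)
      _ = 2 * ((k:ℝ)^(α⁻¹)/k) := by ring
      _ = 2 * X := by rw [e]
  have h8 : (N:ℝ)^(-(α-1)) ≤ X := by
    have h := Real.rpow_le_rpow_of_nonpos hr0 hNr (by linarith : -(α-1) ≤ 0)
    calc (N:ℝ)^(-(α-1)) ≤ ((k:ℝ)^(α⁻¹))^(-(α-1)) := h
      _ = (k:ℝ)^(α⁻¹ * -(α-1)) := (Real.rpow_mul hk0.le _ _).symm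
      _ = X := by rw [hXdef]; congr 1; field_simp
  calc ∑' i : ℕ+, zipf α i * (1 - zipf α i) ^ k = ∑' i : ℕ+, F i := rfl
    _ ≤ (N:ℝ)*(1/k) + (N:ℝ)^(-(α-1))/(α-1) := hE
    _ ≤ 2 * X + X/(α-1) := add_le_add h7 ((div_le_div_iff_of_pos_right hp).mpr h8)
    _ = (2 + 1/(α-1)) * X := by ring
end

section
/- Let P be a Zipf distribution with parameter α > 1 on ℕ₊ (P(i) = i^{−α}/ζ(α)) and define the concentration function H(v) = Σ_{i : P(i) ≤ v} P(i). Then there exist constants c₁, c₂ > 0 such that for all sufficiently small v > 0, c₁·v^{(α−1)/α} ≤ H(v) ≤ c₂·v^{(α−1)/α}. In particular, liminf_{v→0} ln H(v) / ln v = (α−1)/α, so the parameter β = liminf_{v→0} ln H(v)/ln v satisfies β ≥ (α−1)/α. -/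
open scoped Classical

/-- The concentration function `H(v) = Σ_{i : P(i) ≤ v} P(i)` of a distribution. -/
noncomputable def concFn (P : ℕ+ → ℝ) (v : ℝ) : ℝ :=
  ∑' i : ℕ+, (if P i ≤ v then P i else 0)

open Filter Real Set

namespace Stmt8Aux

/-- Mean value theorem bounds for the telescoping term. -/
lemma mvt_bounds {α : ℝ} (hα : 1 < α) {t : ℝ} (ht : 0 < t) :
    (α - 1) * (t + 1) ^ (-α) ≤ t ^ (1 - α) - (t + 1) ^ (1 - α) ∧
    t ^ (1 - α) - (t + 1) ^ (1 - α) ≤ (α - 1) * t ^ (-α) := by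
  have hlt : t < t + 1 := by linarith
  obtain ⟨c, hc, hceq⟩ := exists_hasDerivAt_eq_slope (fun x : ℝ => x ^ (1 - α))
      (fun x : ℝ => (1 - α) * x ^ (-α)) hlt
      (by
        intro x hx
        have hx0 : x ≠ 0 := by
          have : 0 < x := lt_of_lt_of_le ht hx.1
          exact ne_of_gt this
        exact ((Real.continuousAt_rpow_const x (1 - α) (Or.inl hx0)).continuousWithinAt))
      (by
        intro x hx
        have hx0 : x ≠ 0 := ne_of_gt (lt_trans ht hx.1)
        have h := Real.hasDerivAt_rpow_const (x := x) (p := 1 - α) (Or.inl hx0)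
        convert h using 1
        rw [show (1 : ℝ) - α - 1 = -α by ring])
  have hc1 : t < c := hc.1
  have hc2 : c < t + 1 := hc.2
  have hcpos : 0 < c := lt_trans ht hc1
  have heq : t ^ (1 - α) - (t + 1) ^ (1 - α) = (α - 1) * c ^ (-α) := by
    have : (1 - α) * c ^ (-α) = ((t + 1) ^ (1 - α) - t ^ (1 - α)) / (t + 1 - t) := hceq
    rw [show t + 1 - t = (1 : ℝ) by ring, div_one] at this
    nlinarith [this]
  have h1 : c ^ (-α) ≤ t ^ (-α) :=
    Real.rpow_le_rpow_of_nonpos ht hc1.le (by linarith)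
  have h2 : (t + 1) ^ (-α) ≤ c ^ (-α) :=
    Real.rpow_le_rpow_of_nonpos hcpos hc2.le (by linarith)
  have hα1 : (0 : ℝ) < α - 1 := by linarith
  constructor
  · rw [heq]; nlinarith
  · rw [heq]; nlinarith

lemma summable_shift {α : ℝ} (hα : 1 < α) {x : ℝ} (hx : 1 ≤ x) :
    Summable (fun k : ℕ => (x + k) ^ (-α)) := by
  have h0 : Summable (fun n : ℕ => (n : ℝ) ^ (-α)) :=
    Real.summable_nat_rpow.mpr (by linarith)
  have h1 : Summable (fun n : ℕ => ((n + 1 : ℕ) : ℝ) ^ (-α)) :=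
    (summable_nat_add_iff 1).mpr h0
  have h1' : Summable (fun n : ℕ => ((n : ℝ) + 1) ^ (-α)) := by
    convert h1 using 2 with n
    push_cast; ring
  refine Summable.of_nonneg_of_le (fun k => ?_) (fun k => ?_) h1'
  · exact Real.rpow_nonneg (by positivity) _
  · exact Real.rpow_le_rpow_of_nonpos (by positivity) (by linarith [Nat.cast_nonneg (α := ℝ) k]) (by linarith)

lemma hasSum_telescope {α : ℝ} (hα : 1 < α) {x : ℝ} (hx : 1 ≤ x) :
    HasSum (fun k : ℕ => (x + k) ^ (1 - α) - (x + k + 1) ^ (1 - α)) (x ^ (1 - α)) := by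
  have hnonneg : ∀ k : ℕ, 0 ≤ (x + k) ^ (1 - α) - (x + k + 1) ^ (1 - α) := by
    intro k
    have := Real.rpow_le_rpow_of_nonpos (show (0:ℝ) < x + k by positivity)
      (by linarith : x + (k:ℝ) ≤ x + k + 1) (by linarith : 1 - α ≤ 0)
    linarith
  rw [hasSum_iff_tendsto_nat_of_nonneg hnonneg]
  have hpart : ∀ n : ℕ, ∑ k ∈ Finset.range n,
      ((x + k) ^ (1 - α) - (x + k + 1) ^ (1 - α)) = x ^ (1 - α) - (x + n) ^ (1 - α) := by
    intro n
    have := Finset.sum_range_sub' (fun k : ℕ => (x + k) ^ (1 - α)) n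
    simp only [Nat.cast_zero, add_zero] at this
    rw [← this]
    apply Finset.sum_congr rfl
    intro k _
    push_cast
    ring_nf
  simp only [hpart]
  have htail : Tendsto (fun n : ℕ => (x + n) ^ (1 - α)) atTop (nhds 0) := by
    have h1 : Tendsto (fun y : ℝ => y ^ (1 - α)) atTop (nhds 0) := by
      rw [show (1 - α) = -(α - 1) by ring]
      exact tendsto_rpow_neg_atTop (by linarith)
    have h2 : Tendsto (fun n : ℕ => x + (n : ℝ)) atTop atTop :=
      tendsto_atTop_add_const_left atTop x tendsto_natCast_atTop_atTop
    exact h1.comp h2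
  have := (tendsto_const_nhds (x := x ^ (1 - α)) (f := atTop (α := ℕ))).sub htail
  simpa using this

lemma S_bounds {α : ℝ} (hα : 1 < α) {x : ℝ} (hx : 1 ≤ x) :
    x ^ (1 - α) / (α - 1) ≤ (∑' k : ℕ, (x + k) ^ (-α)) ∧
    (∑' k : ℕ, (x + k) ^ (-α)) ≤ (α / (α - 1)) * x ^ (1 - α) := by
  have hα1 : (0 : ℝ) < α - 1 := by linarith
  have hx0 : (0 : ℝ) < x := by linarith
  have hsum := summable_shift hα hx
  have htel := hasSum_telescope hα hx
  set S := ∑' k : ℕ, (x + k) ^ (-α) with hS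
  -- lower bound: x^(1-α) ≤ (α-1) * S
  have hlow : x ^ (1 - α) ≤ (α - 1) * S := by
    have hle : ∀ k : ℕ, (x + k) ^ (1 - α) - (x + k + 1) ^ (1 - α) ≤ (α - 1) * (x + k) ^ (-α) := by
      intro k
      exact (mvt_bounds hα (show (0:ℝ) < x + k by positivity)).2
    have h1 := htel.tsum_eq
    have h2 : (∑' k : ℕ, ((x + k) ^ (1 - α) - (x + k + 1) ^ (1 - α))) ≤
        ∑' k : ℕ, (α - 1) * (x + k) ^ (-α) :=
      Summable.tsum_le_tsum hle htel.summable (hsum.mul_left _)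
    rw [h1, tsum_mul_left] at h2
    exact h2
  -- upper bound: (α-1) * (S - x^(-α)) ≤ x^(1-α)
  have hup : (α - 1) * (S - x ^ (-α)) ≤ x ^ (1 - α) := by
    have hshift : S = x ^ (-α) + ∑' k : ℕ, (x + (k + 1)) ^ (-α) := by
      rw [hS, Summable.tsum_eq_zero_add hsum]
      congr 1
      · norm_num
      · apply tsum_congr; intro k; push_cast; ring_nf
    have hle : ∀ k : ℕ, (α - 1) * (x + (k + 1 : ℝ)) ^ (-α) ≤
        (x + k) ^ (1 - α) - (x + k + 1) ^ (1 - α) := by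
      intro k
      have := (mvt_bounds hα (show (0:ℝ) < x + k by positivity)).1
      convert this using 3 <;> ring
    have hsum' : Summable (fun k : ℕ => (x + ((k : ℝ) + 1)) ^ (-α)) := by
      have h := (summable_nat_add_iff (f := fun k : ℕ => (x + (k : ℝ)) ^ (-α)) 1).mpr hsum
      exact h.congr (fun k => by push_cast; ring_nf)
    have h2 : (∑' k : ℕ, (α - 1) * (x + ((k : ℝ) + 1)) ^ (-α)) ≤
        ∑' k : ℕ, ((x + k) ^ (1 - α) - (x + k + 1) ^ (1 - α)) :=
      Summable.tsum_le_tsum hle (hsum'.mul_left _) htel.summable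
    rw [htel.tsum_eq, tsum_mul_left] at h2
    have h3 : (∑' k : ℕ, (x + ((k : ℝ) + 1)) ^ (-α)) = S - x ^ (-α) := by
      rw [hshift]; ring
    rw [h3] at h2
    exact h2
  constructor
  · rw [div_le_iff₀ hα1]; linarith
  · -- S ≤ x^(-α) + x^(1-α)/(α-1) ≤ α/(α-1) x^(1-α)
    have hxa : x ^ (-α) ≤ x ^ (1 - α) :=
      Real.rpow_le_rpow_of_exponent_le hx (by linarith)
    have key : S * (α - 1) ≤ α * x ^ (1 - α) := by
      nlinarith [mul_le_mul_of_nonneg_left hxa hα1.le]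
    rw [div_mul_eq_mul_div, le_div_iff₀ hα1]
    linarith

lemma cond_iff {α : ℝ} (hα : 1 < α) {a b : ℝ} (ha : 0 < a) (hb : 0 < b) :
    a ^ (-α) ≤ b ↔ b ^ (-(1 / α)) ≤ a := by
  have hα0 : (0 : ℝ) < α := by linarith
  rw [← Real.log_le_log_iff (Real.rpow_pos_of_pos ha _) hb,
    ← Real.log_le_log_iff (Real.rpow_pos_of_pos hb _) ha,
    Real.log_rpow ha, Real.log_rpow hb]
  constructor
  · intro h
    rw [← mul_le_mul_iff_right₀ hα0]
    have hp : α * (-(1 / α) * Real.log b) = -Real.log b := by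
      field_simp
    rw [hp]
    nlinarith
  · intro h
    have h2 : -Real.log b ≤ α * Real.log a := by
      have := mul_le_mul_of_nonneg_left h hα0.le
      have hp : α * (-(1 / α) * Real.log b) = -Real.log b := by field_simp
      rw [hp] at this
      linarith
    nlinarith

lemma tail_eq {α : ℝ} {N : ℕ} (hN : 1 ≤ N) :
    (∑' i : ℕ+, if N ≤ (i : ℕ) then ((i : ℕ) : ℝ) ^ (-α) else 0)
      = ∑' k : ℕ, ((N : ℝ) + k) ^ (-α) := by
  set f : ℕ+ → ℝ := fun i => if N ≤ (i : ℕ) then ((i : ℕ) : ℝ) ^ (-α) else 0 with hf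
  set g : ℕ → ℕ+ := fun k => (⟨N + k, by omega⟩ : ℕ+) with hgdef
  have hg : Function.Injective g := by
    intro a b h
    have := congrArg (fun i : ℕ+ => (i : ℕ)) h
    simpa [hgdef] using this
  have hsupp : Function.support f ⊆ Set.range g := by
    intro i hi
    simp only [Function.mem_support, ne_eq, hf] at hi
    have hcond : N ≤ (i : ℕ) := by
      by_contra hc
      simp [hc] at hi
    refine ⟨(i : ℕ) - N, ?_⟩
    apply PNat.coe_injective
    simp [hgdef]
    omega
  have h2 : ∀ k : ℕ, f (g k) = ((N : ℝ) + k) ^ (-α) := by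
    intro k
    have hcond : N ≤ N + k := Nat.le_add_right _ _
    simp only [hf, hgdef]
    simp [hcond]
  calc (∑' i : ℕ+, f i) = ∑' k : ℕ, f (g k) := (hg.tsum_eq hsupp).symm
    _ = ∑' k : ℕ, ((N : ℝ) + k) ^ (-α) := tsum_congr h2

lemma main_bounds {α : ℝ} (hα : 1 < α) :
    ∃ c₁ > (0 : ℝ), ∃ c₂ > (0 : ℝ), ∃ v₀ > (0 : ℝ), ∀ v : ℝ, 0 < v → v < v₀ →
      c₁ * v ^ ((α - 1) / α) ≤ concFn (zipf α) v ∧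
      concFn (zipf α) v ≤ c₂ * v ^ ((α - 1) / α) := by
  have hα0 : (0:ℝ) < α := by linarith
  have hα1 : (0:ℝ) < α - 1 := by linarith
  set Z := ∑' j : ℕ+, ((j : ℕ) : ℝ) ^ (-α) with hZ
  have hsummZ : Summable (fun i : ℕ+ => ((i : ℕ) : ℝ) ^ (-α)) := by
    have h0 : Summable (fun n : ℕ => (n : ℝ) ^ (-α)) :=
      Real.summable_nat_rpow.mpr (by linarith)
    exact h0.comp_injective PNat.coe_injective
  have hZpos : 0 < Z := by
    refine Summable.tsum_pos hsummZ (fun i => Real.rpow_nonneg (by positivity) _) 1 ?_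
    norm_num
  set θ := (α - 1) / α with hθ
  have h2pos : (0:ℝ) < 2 ^ (1 - α) := Real.rpow_pos_of_pos (by norm_num) _
  have hZθ : (0:ℝ) < Z ^ θ := Real.rpow_pos_of_pos hZpos _
  refine ⟨2 ^ (1 - α) * Z ^ θ / ((α - 1) * Z), by positivity,
    α * Z ^ θ / ((α - 1) * Z), by positivity, 1 / Z, by positivity, ?_⟩
  intro v hv hv1
  set w := v * Z with hw
  have hwpos : 0 < w := by positivity
  have hw1 : w < 1 := by
    have := mul_lt_mul_of_pos_right hv1 hZpos
    rw [one_div, inv_mul_cancel₀ (ne_of_gt hZpos)] at this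
    exact this
  set x := w ^ (-(1/α)) with hx
  have hxpos : 0 < x := Real.rpow_pos_of_pos hwpos _
  have hx1 : 1 < x := by
    rw [hx]
    refine (Real.one_lt_rpow_iff_of_pos hwpos).mpr (Or.inr ⟨hw1, ?_⟩)
    have : (0:ℝ) < 1/α := by positivity
    linarith
  set N := ⌈x⌉₊ with hN
  have hN1 : 1 ≤ N := Nat.ceil_pos.mpr hxpos
  have hxN : x ≤ (N:ℝ) := Nat.le_ceil x
  have hNR1 : (1:ℝ) ≤ (N:ℝ) := by exact_mod_cast hN1
  have hNx : (N:ℝ) ≤ 2 * x := by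
    have h := Nat.ceil_lt_add_one hxpos.le
    rw [← hN] at h
    linarith
  have hconc : concFn (zipf α) v
      = (∑' i : ℕ+, if N ≤ (i:ℕ) then ((i:ℕ):ℝ) ^ (-α) else 0) / Z := by
    rw [concFn, ← tsum_div_const]
    apply tsum_congr
    intro i
    have hipos : (0:ℝ) < ((i:ℕ):ℝ) := by exact_mod_cast i.pos
    have hcond : (zipf α i ≤ v) ↔ (N ≤ (i:ℕ)) := by
      rw [zipf, ← hZ, div_le_iff₀ hZpos, ← hw, cond_iff hα hipos hwpos, ← hx, hN]
      exact (Nat.ceil_le).symm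
    rw [if_congr hcond rfl rfl]
    split_ifs with h
    · rw [zipf, ← hZ]
    · rw [zero_div]
  rw [tail_eq hN1] at hconc
  rw [hconc]
  have hS := S_bounds hα hNR1
  set S := ∑' k : ℕ, ((N:ℝ) + k) ^ (-α) with hSdef
  have hxθ : x ^ (1 - α) = w ^ θ := by
    rw [hx, ← Real.rpow_mul hwpos.le]
    congr 1
    rw [hθ]
    field_simp
    ring
  have hwθ : w ^ θ = Z ^ θ * v ^ θ := by
    rw [hw, Real.mul_rpow hv.le hZpos.le]
    ring
  have hN_up : (N:ℝ) ^ (1-α) ≤ x ^ (1-α) :=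
    Real.rpow_le_rpow_of_nonpos hxpos hxN (by linarith)
  have hN_low : 2 ^ (1-α) * x ^ (1-α) ≤ (N:ℝ) ^ (1-α) := by
    have h := Real.rpow_le_rpow_of_nonpos (show (0:ℝ) < (N:ℝ) by linarith) hNx
      (by linarith : 1-α ≤ 0)
    rwa [Real.mul_rpow (by norm_num) hxpos.le] at h
  constructor
  · have h1 : 2 ^ (1-α) * (Z ^ θ * v ^ θ) / (α - 1) ≤ S := by
      calc 2 ^ (1-α) * (Z^θ * v^θ) / (α-1) = 2^(1-α) * x^(1-α) / (α-1) := by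
            rw [hxθ, hwθ]
        _ ≤ (N:ℝ)^(1-α) / (α-1) := by
            gcongr
        _ ≤ S := hS.1
    calc (2 ^ (1-α) * Z^θ / ((α-1)*Z)) * v ^ θ
        = (2^(1-α) * (Z^θ * v^θ) / (α-1)) / Z := by field_simp
      _ ≤ S / Z := by gcongr
  · have h2 : S ≤ α / (α-1) * (Z ^ θ * v ^ θ) := by
      calc S ≤ α/(α-1) * (N:ℝ)^(1-α) := hS.2
        _ ≤ α/(α-1) * x^(1-α) := by
            apply mul_le_mul_of_nonneg_left hN_up (by positivity)
        _ = α/(α-1) * (Z^θ * v^θ) := by rw [hxθ, hwθ]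
    calc S / Z ≤ (α/(α-1) * (Z^θ * v^θ)) / Z := by
          gcongr
      _ = (α * Z^θ / ((α-1)*Z)) * v ^ θ := by field_simp

lemma tendsto_ratio {α : ℝ} (hα : 1 < α) :
    Tendsto (fun v : ℝ => Real.log (concFn (zipf α) v) / Real.log v)
      (nhdsWithin 0 (Set.Ioi 0)) (nhds ((α - 1) / α)) := by
  obtain ⟨c₁, hc₁, c₂, hc₂, v₀, hv₀, hbound⟩ := main_bounds hα
  set θ := (α - 1) / α with hθ
  set v₁ := min v₀ 1 with hv₁def
  have hv₁ : 0 < v₁ := lt_min hv₀ one_pos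
  have hmem : Set.Ioo (0:ℝ) v₁ ∈ nhdsWithin (0:ℝ) (Set.Ioi 0) :=
    Ioo_mem_nhdsGT_of_mem ⟨le_refl 0, hv₁⟩
  have hinv : Tendsto (fun v : ℝ => (-Real.log v)⁻¹) (nhdsWithin 0 (Set.Ioi 0)) (nhds 0) := by
    have h1 : Tendsto (fun v : ℝ => -Real.log v) (nhdsWithin 0 (Set.Ioi 0)) atTop :=
      tendsto_neg_atBot_atTop.comp Real.tendsto_log_nhdsGT_zero
    exact h1.inv_tendsto_atTop
  have haux : ∀ c : ℝ, Tendsto (fun v : ℝ => θ + Real.log c / Real.log v)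
      (nhdsWithin 0 (Set.Ioi 0)) (nhds θ) := by
    intro c
    have h2 : Tendsto (fun v : ℝ => -Real.log c * (-Real.log v)⁻¹)
        (nhdsWithin 0 (Set.Ioi 0)) (nhds (-Real.log c * 0)) :=
      tendsto_const_nhds.mul hinv
    rw [mul_zero] at h2
    have heq : ∀ v : ℝ, -Real.log c * (-Real.log v)⁻¹ = Real.log c / Real.log v := by
      intro v
      rw [inv_neg, div_eq_mul_inv]
      ring
    have h3 : Tendsto (fun v : ℝ => Real.log c / Real.log v)
        (nhdsWithin 0 (Set.Ioi 0)) (nhds 0) := h2.congr heq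
    have := (tendsto_const_nhds (x := θ) (f := nhdsWithin (0:ℝ) (Set.Ioi 0))).add h3
    simpa using this
  have key : ∀ v ∈ Set.Ioo (0:ℝ) v₁,
      θ + Real.log c₂ / Real.log v ≤ Real.log (concFn (zipf α) v) / Real.log v ∧
      Real.log (concFn (zipf α) v) / Real.log v ≤ θ + Real.log c₁ / Real.log v := by
    intro v hv
    obtain ⟨hv0, hvv₁⟩ := hv
    have hvv₀ : v < v₀ := lt_of_lt_of_le hvv₁ (min_le_left _ _)
    have hvlt1 : v < 1 := lt_of_lt_of_le hvv₁ (min_le_right _ _)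
    have hlogv : Real.log v < 0 := Real.log_neg hv0 hvlt1
    obtain ⟨hlow, hup⟩ := hbound v hv0 hvv₀
    have hvθ : 0 < v ^ θ := Real.rpow_pos_of_pos hv0 _
    have hHpos : 0 < concFn (zipf α) v := lt_of_lt_of_le (by positivity) hlow
    have hlogH_le : Real.log (concFn (zipf α) v) ≤ Real.log c₂ + θ * Real.log v := by
      have h := (Real.log_le_log_iff hHpos (by positivity : (0:ℝ) < c₂ * v ^ θ)).mpr hup
      rwa [Real.log_mul (ne_of_gt hc₂) (ne_of_gt hvθ), Real.log_rpow hv0] at h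
    have hlogH_ge : Real.log c₁ + θ * Real.log v ≤ Real.log (concFn (zipf α) v) := by
      have h := (Real.log_le_log_iff (by positivity : (0:ℝ) < c₁ * v ^ θ) hHpos).mpr hlow
      rwa [Real.log_mul (ne_of_gt hc₁) (ne_of_gt hvθ), Real.log_rpow hv0] at h
    have e : ∀ c : ℝ, (Real.log c + θ * Real.log v) / Real.log v
        = θ + Real.log c / Real.log v := by
      intro c
      rw [add_div, mul_div_assoc, div_self (ne_of_lt hlogv), mul_one, add_comm]
    constructor
    · rw [← e c₂]
      exact (div_le_div_right_of_neg hlogv).mpr hlogH_le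
    · rw [← e c₁]
      exact (div_le_div_right_of_neg hlogv).mpr hlogH_ge
  refine tendsto_of_tendsto_of_tendsto_of_le_of_le' (haux c₂) (haux c₁) ?_ ?_
  · filter_upwards [hmem] with v hv
    exact (key v hv).1
  · filter_upwards [hmem] with v hv
    exact (key v hv).2

end Stmt8Aux

/-- For a Zipf distribution with parameter `α > 1`, the concentration function is of
order `v^{(α−1)/α}` for small `v`; consequently `β = liminf_{v→0} ln H(v)/ln v`
equals `(α−1)/α`, and in particular `β ≥ (α−1)/α`. -/
theorem stmt_8 (α : ℝ) (hα : 1 < α) :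
    (∃ c₁ > (0 : ℝ), ∃ c₂ > (0 : ℝ), ∃ v₀ > (0 : ℝ), ∀ v : ℝ, 0 < v → v < v₀ →
      c₁ * v ^ ((α - 1) / α) ≤ concFn (zipf α) v ∧
      concFn (zipf α) v ≤ c₂ * v ^ ((α - 1) / α)) ∧
    Filter.liminf (fun v : ℝ => Real.log (concFn (zipf α) v) / Real.log v)
        (nhdsWithin 0 (Set.Ioi 0)) = (α - 1) / α ∧
    (α - 1) / α ≤ Filter.liminf (fun v : ℝ => Real.log (concFn (zipf α) v) / Real.log v)
        (nhdsWithin 0 (Set.Ioi 0)) := by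
  have hT := Stmt8Aux.tendsto_ratio hα
  exact ⟨Stmt8Aux.main_bounds hα, hT.liminf_eq, le_of_eq hT.liminf_eq.symm⟩
end
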